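/- arXiv:2603.16022 — 6 statements merged into one kernel-verified Lean document; each statement's English description precedes it below -/
import Mathlib

section
/- Let G be a locally compact second countable group and let H be a closed subgroup of G. Then the normalizer N_G(H) admits a G-invariant Borel probability measure on G/N_G(H) if and only if there exists an invariant random subgroup μ of G (a conjugation-invariant Borel probability measure on the Chabauty space of closed subgroups) such that μ gives full measure to the conjugacy class {gHg⁻¹ : g ∈ G}. -/
open MeasureTheory

/-- The Chabauty space of closed subgroups of `G`. -/
def Chab (G : Type*) [Group G] [TopologicalSpace G] : Type _ :=
  {H : Subgroup G // IsClosed (H : Set G)}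

/-- The Chabauty topology, generated by the sets `Hit(V)` for `V` open
and `Miss(K)` for `K` compact. -/
instance chabTop (G : Type*) [Group G] [TopologicalSpace G] : TopologicalSpace (Chab G) :=
  TopologicalSpace.generateFrom
    ({S | ∃ V : Set G, IsOpen V ∧ S = {H : Chab G | ((H.1 : Set G) ∩ V).Nonempty}} ∪
     {S | ∃ K : Set G, IsCompact K ∧ S = {H : Chab G | (H.1 : Set G) ∩ K = ∅}})

instance chabMeas (G : Type*) [Group G] [TopologicalSpace G] : MeasurableSpace (Chab G) :=
  borel _

/-- Conjugation action of `G` on its Chabauty space. -/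
def conjChab {G : Type*} [Group G] [TopologicalSpace G] [IsTopologicalGroup G]
    (g : G) (H : Chab G) : Chab G :=
  ⟨H.1.map (MulAut.conj g).toMonoidHom, by
    have h1 : (⇑(MulAut.conj g).toMonoidHom) '' ((H.1 : Subgroup G) : Set G)
        = ((Homeomorph.mulLeft g).trans (Homeomorph.mulRight g⁻¹)) ''
            ((H.1 : Subgroup G) : Set G) := by
      apply Set.image_congr'
      intro x
      simp [mul_assoc]
    rw [Subgroup.coe_map, h1, Homeomorph.isClosed_image]
    exact H.2⟩

/-! ### Auxiliary material -/

open TopologicalSpace Set Pointwise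

section PolishAux

set_option linter.unusedSectionVars false

/-- A locally compact second countable Hausdorff space has a second countable
one-point compactification. -/
lemma AuxIRS.secondCountable_onePoint (X : Type*) [TopologicalSpace X] [T2Space X]
    [LocallyCompactSpace X] [SecondCountableTopology X] :
    SecondCountableTopology (OnePoint X) := by
  haveI : T4Space (OnePoint X) := ⟨⟩
  obtain K := CompactExhaustion.choice X
  set S : Set (Set (OnePoint X)) :=
    ((fun s => (OnePoint.some '' s : Set (OnePoint X))) '' countableBasis X) ∪
      (range fun n => ((OnePoint.some '' (K n) : Set (OnePoint X))ᶜ)) with hS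
  have hKclosed : ∀ n, IsClosed (OnePoint.some '' (K n) : Set (OnePoint X)) := fun n =>
    (((K.isCompact n).image OnePoint.continuous_coe)).isClosed
  have hbasis : IsTopologicalBasis S := by
    apply isTopologicalBasis_of_isOpen_of_nhds
    · rintro u (⟨b, hb, rfl⟩ | ⟨n, rfl⟩)
      · exact OnePoint.isOpenEmbedding_coe.isOpenMap _ (isOpen_of_mem_countableBasis hb)
      · exact (hKclosed n).isOpen_compl
    · rintro (⟨⟩ | x) U hxU hU
      · have h1 : IsCompact (OnePoint.some ⁻¹' U)ᶜ := ((OnePoint.isOpen_iff_of_mem hxU).1 hU).2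
        obtain ⟨n, hn⟩ := K.exists_superset_of_isCompact h1
        refine ⟨(OnePoint.some '' (K n))ᶜ, Or.inr ⟨n, rfl⟩, ?_, ?_⟩
        · rintro ⟨y, -, hy⟩
          exact OnePoint.coe_ne_infty y hy
        · rintro (⟨⟩ | y) hy
          · exact hxU
          · have : y ∉ K n := fun h => hy (mem_image_of_mem _ h)
            have : y ∈ OnePoint.some ⁻¹' U := by
              by_contra h; exact this (hn h)
            exact this
      · have hx' : x ∈ OnePoint.some ⁻¹' U := hxU
        obtain ⟨b, hb, hxb, hbU⟩ := (isBasis_countableBasis X).exists_subset_of_mem_open hx'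
          (hU.preimage OnePoint.continuous_coe)
        exact ⟨OnePoint.some '' b, Or.inl ⟨b, hb, rfl⟩, mem_image_of_mem _ hxb,
          by rintro y ⟨z, hz, rfl⟩; exact hbU hz⟩
  exact hbasis.secondCountableTopology
    (((countable_countableBasis X).image _).union (countable_range _))

/-- A locally compact second countable Hausdorff space is Polish. -/
lemma AuxIRS.polishSpace_of_lcsc (X : Type*) [TopologicalSpace X] [T2Space X]
    [LocallyCompactSpace X] [SecondCountableTopology X] : PolishSpace X := by
  haveI := AuxIRS.secondCountable_onePoint X
  haveI : T4Space (OnePoint X) := ⟨⟩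
  letI : MetricSpace (OnePoint X) := TopologicalSpace.metrizableSpaceMetric _
  haveI : PolishSpace (OnePoint X) := inferInstance
  haveI : PolishSpace (range (OnePoint.some : X → OnePoint X)) :=
    OnePoint.isOpen_range_coe.polishSpace
  exact (OnePoint.isOpenEmbedding_coe.isEmbedding.toHomeomorph
    ).isClosedEmbedding.polishSpace

end PolishAux

namespace AuxIRS

section ChabAux

set_option linter.unusedSectionVars false

variable {G : Type*} [Group G] [TopologicalSpace G] [IsTopologicalGroup G]

lemma conjChab_coe (g : G) (L : Chab G) :
    ((conjChab g L).1 : Set G) = (fun x => g * x * g⁻¹) '' (L.1 : Set G) := by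
  rw [conjChab, Subgroup.coe_map]
  apply Set.image_congr'
  intro x
  simp

lemma conjChab_mul (g h : G) (L : Chab G) :
    conjChab g (conjChab h L) = conjChab (g * h) L := by
  apply Subtype.ext
  show (L.1.map _).map _ = _
  rw [Subgroup.map_map]
  congr 1
  ext x
  simp [mul_assoc]

lemma conjChab_one (L : Chab G) : conjChab 1 L = L := by
  apply Subtype.ext
  show L.1.map _ = L.1
  ext x
  simp

lemma conjChab_inv_self (g : G) (L : Chab G) : conjChab g⁻¹ (conjChab g L) = L := by
  rw [conjChab_mul, inv_mul_cancel, conjChab_one]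

lemma continuous_conjChab (g : G) : Continuous (conjChab g : Chab G → Chab G) := by
  rw [continuous_generateFrom_iff]
  rintro s (⟨V, hV, rfl⟩ | ⟨K, hK, rfl⟩)
  · have : (conjChab g ⁻¹' {H : Chab G | ((H.1 : Set G) ∩ V).Nonempty})
        = {H : Chab G | ((H.1 : Set G) ∩ ((fun x => g * x * g⁻¹) ⁻¹' V)).Nonempty} := by
      ext L
      simp only [Set.mem_preimage, Set.mem_setOf_eq, conjChab_coe]
      constructor
      · rintro ⟨y, ⟨x, hx, rfl⟩, hyV⟩
        exact ⟨x, hx, hyV⟩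
      · rintro ⟨x, hx, hxV⟩
        exact ⟨g * x * g⁻¹, ⟨x, hx, rfl⟩, hxV⟩
    rw [this]
    exact isOpen_generateFrom_of_mem (Or.inl ⟨_,
      hV.preimage (by continuity), rfl⟩)
  · have : (conjChab g ⁻¹' {H : Chab G | (H.1 : Set G) ∩ K = ∅})
        = {H : Chab G | (H.1 : Set G) ∩ ((fun x => g⁻¹ * x * g) '' K) = ∅} := by
      ext L
      simp only [Set.mem_preimage, Set.mem_setOf_eq, conjChab_coe,
        Set.eq_empty_iff_forall_notMem]
      constructor
      · rintro h x ⟨hxL, y, hyK, rfl⟩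
        refine h (g * (g⁻¹ * y * g) * g⁻¹) ⟨⟨g⁻¹ * y * g, hxL, rfl⟩, ?_⟩
        have : g * (g⁻¹ * y * g) * g⁻¹ = y := by group
        rwa [this]
      · rintro h y ⟨⟨x, hxL, rfl⟩, hK'⟩
        refine h x ⟨hxL, ⟨g * x * g⁻¹, hK', by group⟩⟩
    rw [this]
    exact isOpen_generateFrom_of_mem (Or.inr ⟨_, hK.image (by continuity), rfl⟩)

lemma t2_chab [LocallyCompactSpace G] : T2Space (Chab G) := by
  have key : ∀ (A B : Chab G) (x : G), x ∈ (A.1 : Set G) → x ∉ (B.1 : Set G) →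
      ∃ U V : Set (Chab G), IsOpen U ∧ IsOpen V ∧ A ∈ U ∧ B ∈ V ∧ Disjoint U V := by
    intro A B x hxA hxB
    obtain ⟨s, hs_mem, hs_sub, hs_comp⟩ :=
      LocallyCompactSpace.local_compact_nhds x ((B.1 : Set G)ᶜ)
        (B.2.isOpen_compl.mem_nhds hxB)
    refine ⟨{L : Chab G | ((L.1 : Set G) ∩ interior s).Nonempty},
      {L : Chab G | (L.1 : Set G) ∩ s = ∅},
      isOpen_generateFrom_of_mem (Or.inl ⟨_, isOpen_interior, rfl⟩),
      isOpen_generateFrom_of_mem (Or.inr ⟨_, hs_comp, rfl⟩),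
      ⟨x, hxA, mem_interior_iff_mem_nhds.2 hs_mem⟩,
      Set.eq_empty_iff_forall_notMem.2 fun y hy => hs_sub hy.2 hy.1, ?_⟩
    rw [Set.disjoint_left]
    rintro L ⟨y, hyL, hyint⟩ hLs
    rw [Set.mem_setOf_eq, Set.eq_empty_iff_forall_notMem] at hLs
    exact hLs y ⟨hyL, interior_subset hyint⟩
  constructor
  intro A B hAB
  have hne : ¬ ((A.1 : Set G) ⊆ (B.1 : Set G)) ∨ ¬ ((B.1 : Set G) ⊆ (A.1 : Set G)) := by
    by_contra h
    push_neg at h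
    exact hAB (Subtype.ext (SetLike.coe_injective (le_antisymm h.1 h.2)))
  rcases hne with h | h
  · obtain ⟨x, hxA, hxB⟩ := Set.not_subset.1 h
    obtain ⟨U, V, hU, hV, hAU, hBV, hd⟩ := key A B x hxA hxB
    exact ⟨U, V, hU, hV, hAU, hBV, hd⟩
  · obtain ⟨x, hxB, hxA⟩ := Set.not_subset.1 h
    obtain ⟨U, V, hU, hV, hBU, hAV, hd⟩ := key B A x hxB hxA
    exact ⟨V, U, hV, hU, hAV, hBU, hd.symm⟩

lemma continuous_orbitMap (H : Subgroup G) (hH : IsClosed ((H : Subgroup G) : Set G)) :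
    Continuous (fun g : G => conjChab g (⟨H, hH⟩ : Chab G)) := by
  rw [continuous_generateFrom_iff]
  rintro s (⟨V, hV, rfl⟩ | ⟨K, hK, rfl⟩)
  · have : ((fun g : G => conjChab g (⟨H, hH⟩ : Chab G)) ⁻¹'
        {L : Chab G | ((L.1 : Set G) ∩ V).Nonempty})
        = ⋃ h ∈ (H : Set G), {g : G | g * h * g⁻¹ ∈ V} := by
      ext g
      simp only [Set.mem_preimage, Set.mem_setOf_eq, conjChab_coe, Set.mem_iUnion]
      constructor
      · rintro ⟨y, ⟨x, hx, rfl⟩, hyV⟩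
        exact ⟨x, hx, hyV⟩
      · rintro ⟨x, hx, hxV⟩
        exact ⟨g * x * g⁻¹, ⟨x, hx, rfl⟩, hxV⟩
    rw [this]
    exact isOpen_biUnion fun h _ => hV.preimage (by continuity)
  · haveI : CompactSpace ↥K := isCompact_iff_compactSpace.mp hK
    set T : Set (↥K × G) := {p : ↥K × G | p.2⁻¹ * (p.1 : G) * p.2 ∈ (H : Set G)} with hT
    have hTclosed : IsClosed T := hH.preimage (by continuity)
    have himg : IsClosed (Prod.snd '' T) := isClosedMap_snd_of_compactSpace T hTclosed
    have : ((fun g : G => conjChab g (⟨H, hH⟩ : Chab G)) ⁻¹'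
        {L : Chab G | (L.1 : Set G) ∩ K = ∅}) = (Prod.snd '' T)ᶜ := by
      ext g
      simp only [Set.mem_preimage, Set.mem_setOf_eq, conjChab_coe, Set.mem_compl_iff,
        Set.eq_empty_iff_forall_notMem, Set.mem_image]
      constructor
      · rintro h ⟨⟨⟨k, hkK⟩, g'⟩, hmem, rfl⟩
        refine h (g' * (g'⁻¹ * k * g') * g'⁻¹) ⟨⟨g'⁻¹ * k * g', hmem, rfl⟩, ?_⟩
        have : g' * (g'⁻¹ * k * g') * g'⁻¹ = k := by group
        rwa [this]
      · rintro h y ⟨⟨x, hxH, rfl⟩, hyK⟩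
        refine h ⟨⟨⟨g * x * g⁻¹, hyK⟩, g⟩, ?_, rfl⟩
        show g⁻¹ * (g * x * g⁻¹) * g ∈ (H : Set G)
        have : g⁻¹ * (g * x * g⁻¹) * g = x := by group
        rwa [this]
    rw [this]
    exact himg.isOpen_compl

lemma normalizer_isClosed (H : Subgroup G) (hH : IsClosed ((H : Subgroup G) : Set G)) :
    IsClosed (((Subgroup.normalizer (H : Set G)) : Subgroup G) : Set G) := by
  have : (((Subgroup.normalizer (H : Set G)) : Subgroup G) : Set G) =
      (⋂ h ∈ (H : Set G), {g : G | g * h * g⁻¹ ∈ (H : Set G)}) ∩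
      (⋂ h ∈ (H : Set G), {g : G | g⁻¹ * h * g ∈ (H : Set G)}) := by
    ext g
    constructor
    · intro hg
      rw [SetLike.mem_coe, Subgroup.mem_normalizer_iff] at hg
      refine ⟨Set.mem_iInter₂.2 fun h hh => (hg h).1 hh, Set.mem_iInter₂.2 fun h hh => ?_⟩
      have h2 := (hg (g⁻¹ * h * g)).2
      have e1 : g * (g⁻¹ * h * g) * g⁻¹ = h := by group
      rw [e1] at h2
      exact h2 hh
    · rintro ⟨h1, h2⟩
      rw [SetLike.mem_coe, Subgroup.mem_normalizer_iff]
      intro h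
      constructor
      · intro hh
        exact Set.mem_iInter₂.1 h1 h hh
      · intro hh
        have h3 := Set.mem_iInter₂.1 h2 (g * h * g⁻¹) hh
        have e1 : g⁻¹ * (g * h * g⁻¹) * g = h := by group
        rw [Set.mem_setOf_eq, e1] at h3
        exact h3
  rw [this]
  exact (isClosed_biInter fun h _ => hH.preimage (by continuity)).inter
    (isClosed_biInter fun h _ => hH.preimage (by continuity))

lemma t2_quotient_of_isClosed (N : Subgroup G) (hN : IsClosed ((N : Subgroup G) : Set G)) :
    T2Space (G ⧸ N) := by
  rw [t2_iff_isClosed_diagonal]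
  have hq := (QuotientGroup.isOpenQuotientMap_mk (N := N)).prodMap
    (QuotientGroup.isOpenQuotientMap_mk (N := N))
  rw [← hq.isQuotientMap.isClosed_preimage]
  have : Prod.map (QuotientGroup.mk : G → G ⧸ N) (QuotientGroup.mk : G → G ⧸ N) ⁻¹'
      (Set.diagonal (G ⧸ N)) = {p : G × G | p.1⁻¹ * p.2 ∈ (N : Set G)} := by
    ext ⟨a, b⟩
    simp only [Set.mem_preimage, Prod.map_apply, Set.mem_diagonal_iff, Set.mem_setOf_eq,
      SetLike.mem_coe]
    exact QuotientGroup.eq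
  rw [this]
  exact hN.preimage (by continuity)

lemma conjChab_fixed_iff {H : Subgroup G} {hH : IsClosed ((H : Subgroup G) : Set G)} {n : G} :
    conjChab n (⟨H, hH⟩ : Chab G) = ⟨H, hH⟩ ↔ n ∈ (Subgroup.normalizer (H : Set G)) := by
  constructor
  · intro h
    have hs : H.map (MulAut.conj n).toMonoidHom = H := congrArg Subtype.val h
    rw [Subgroup.mem_normalizer_iff]
    intro x
    constructor
    · intro hx
      have : n * x * n⁻¹ ∈ H.map (MulAut.conj n).toMonoidHom :=
        ⟨x, hx, by simp⟩
      rwa [hs] at this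
    · intro hx
      rw [← hs] at hx
      obtain ⟨y, hy, hyx⟩ := hx
      have h1 : n * y * n⁻¹ = n * x * n⁻¹ := by simpa using hyx
      have h2 : y = x := mul_left_cancel (mul_right_cancel h1)
      rwa [← h2]
  · intro hn
    apply Subtype.ext
    show H.map (MulAut.conj n).toMonoidHom = H
    have hn' := Subgroup.mem_normalizer_iff.1 hn
    ext x
    constructor
    · rintro ⟨y, hy, rfl⟩
      have : (MulAut.conj n).toMonoidHom y = n * y * n⁻¹ := by simp
      rw [this]
      exact (hn' y).1 hy
    · intro hx
      refine ⟨n⁻¹ * x * n, ?_, by simp; group⟩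
      apply (hn' (n⁻¹ * x * n)).2
      have e : n * (n⁻¹ * x * n) * n⁻¹ = x := by group
      rwa [e]

end ChabAux

section BorelQuot

set_option linter.unusedSectionVars false

variable {G : Type*} [Group G] [TopologicalSpace G] [IsTopologicalGroup G]
  [LocallyCompactSpace G] [SecondCountableTopology G]

lemma borelSpace_quotient [MeasurableSpace G] [BorelSpace G]
    (N : Subgroup G) (hN : IsClosed ((N : Subgroup G) : Set G)) :
    BorelSpace (G ⧸ N) := by
  classical
  set C : Subgroup G := (⊥ : Subgroup G).topologicalClosure with hC
  haveI hCnormal : C.Normal := Subgroup.is_normal_topologicalClosure ⊥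
  have hCN : C ≤ N := Subgroup.topologicalClosure_minimal ⊥ bot_le hN
  haveI hCclosed : IsClosed (C : Set G) := Subgroup.isClosed_topologicalClosure ⊥
  haveI : T3Space (G ⧸ C) := QuotientGroup.instT3Space C
  haveI : PolishSpace (G ⧸ C) := AuxIRS.polishSpace_of_lcsc _
  haveI : T2Space (G ⧸ N) := t2_quotient_of_isClosed N hN
  let p : G ⧸ C → G ⧸ N := fun y => Quotient.liftOn' y (QuotientGroup.mk : G → G ⧸ N)
    (fun a b hab => QuotientGroup.eq.mpr (hCN (QuotientGroup.leftRel_apply.mp hab)))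
  have hp_comp : ∀ g : G, p ((g : G ⧸ C)) = (g : G ⧸ N) := fun g => rfl
  have hp_cont : Continuous p := by
    rw [(QuotientGroup.isQuotientMap_mk C).continuous_iff]
    exact QuotientGroup.continuous_mk
  have hp_surj : Function.Surjective p := fun x => by
    obtain ⟨g, rfl⟩ := QuotientGroup.mk_surjective x
    exact ⟨(g : G ⧸ C), rfl⟩
  have hsat : ∀ U : Set G, IsOpen U →
      (QuotientGroup.mk : G → G ⧸ C) ⁻¹' ((QuotientGroup.mk : G → G ⧸ C) '' U) = U := by
    intro U hU
    refine Subset.antisymm ?_ (Set.subset_preimage_image _ _)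
    rintro x ⟨u, huU, hux⟩
    have hmem : u⁻¹ * x ∈ C := QuotientGroup.eq.mp hux
    have hxu : x * u⁻¹ ∈ C := by
      have : x * u⁻¹ = u * (u⁻¹ * x) * u⁻¹ := by group
      rw [this]
      exact hCnormal.conj_mem _ hmem u
    have hinsep : Inseparable x u := by
      rw [group_inseparable_iff]
      have hset : ((C : Subgroup G) : Set G) = closure ((⊥ : Subgroup G) : Set G) :=
        Subgroup.topologicalClosure_coe
      have hmem2 : x / u ∈ (C : Set G) := by
        rw [div_eq_mul_inv]
        exact hxu
      rw [hset] at hmem2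
      have hbot : ((⊥ : Subgroup G) : Set G) = (1 : Set G) := by
        ext z
        simp [Set.mem_one]
      rwa [hbot] at hmem2
    exact (hinsep.mem_open_iff hU).mpr huU
  have hcomap : (‹MeasurableSpace G› : MeasurableSpace G) =
      MeasurableSpace.comap (QuotientGroup.mk : G → G ⧸ C) (borel (G ⧸ C)) := by
    rw [BorelSpace.measurable_eq (α := G)]
    refine le_antisymm (MeasurableSpace.generateFrom_le fun t ht => ?_) ?_
    · exact ⟨(QuotientGroup.mk : G → G ⧸ C) '' t,
        MeasurableSpace.measurableSet_generateFrom (QuotientGroup.isOpenMap_coe t ht),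
        hsat t ht⟩
    · rw [show borel (G ⧸ C) = MeasurableSpace.generateFrom {s : Set (G ⧸ C) | IsOpen s} from rfl,
        MeasurableSpace.comap_generateFrom]
      exact MeasurableSpace.generateFrom_le fun t ⟨V, hV, hVt⟩ =>
        MeasurableSpace.measurableSet_generateFrom (hVt ▸ hV.preimage QuotientGroup.continuous_mk)
  have hmap : MeasurableSpace.map (QuotientGroup.mk : G → G ⧸ C) ‹MeasurableSpace G›
      = borel (G ⧸ C) := by
    refine le_antisymm ?_ ?_
    · intro A hA
      rw [MeasurableSpace.map_def, hcomap, MeasurableSpace.measurableSet_comap] at hA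
      obtain ⟨B, hB, hBA⟩ := hA
      rwa [QuotientGroup.mk_surjective.preimage_injective hBA] at hB
    · intro A hA
      rw [MeasurableSpace.map_def, hcomap]
      exact ⟨A, hA, rfl⟩
  constructor
  show (QuotientGroup.measurableSpace N : MeasurableSpace (G ⧸ N)) = borel (G ⧸ N)
  have h1 : (QuotientGroup.measurableSpace N : MeasurableSpace (G ⧸ N)) =
      MeasurableSpace.map (QuotientGroup.mk : G → G ⧸ N) ‹MeasurableSpace G› := rfl
  have h2 : (QuotientGroup.mk : G → G ⧸ N) =
      p ∘ (QuotientGroup.mk : G → G ⧸ C) := funext fun g => (hp_comp g).symm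
  rw [h1, h2, ← MeasurableSpace.map_comp, hmap]
  exact hp_cont.map_borel_eq hp_surj

end BorelQuot

end AuxIRS

/-- for a closed subgroup `H` of a locally compact second countable
group `G`, the quotient `G ⧸ N_G(H)` carries a `G`-invariant Borel probability
measure if and only if there is an invariant random subgroup of `G` giving full
measure to the conjugacy class of `H` in the Chabauty space. -/
theorem cofinite_normalizer_iff_irs_on_conjugacy_class
    (G : Type*) [Group G] [TopologicalSpace G] [IsTopologicalGroup G]
    [LocallyCompactSpace G] [SecondCountableTopology G]
    [MeasurableSpace G] [BorelSpace G]
    (H : Subgroup G) (hH : IsClosed ((H : Subgroup G) : Set G)) :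
    (∃ ν : Measure (G ⧸ Subgroup.normalizer (H : Set G)), IsProbabilityMeasure ν ∧
        ∀ g : G, ∀ A : Set (G ⧸ Subgroup.normalizer (H : Set G)), MeasurableSet A →
          ν ((fun x => g • x) ⁻¹' A) = ν A) ↔
      (∃ μ : Measure (Chab G), IsProbabilityMeasure μ ∧
        (∀ g : G, ∀ A : Set (Chab G), MeasurableSet A →
          μ (conjChab g ⁻¹' A) = μ A) ∧
        μ {K : Chab G | ∃ g : G, K = conjChab g ⟨H, hH⟩} = 1) := by
  classical
  have hN : IsClosed (((Subgroup.normalizer (H : Set G)) : Subgroup G) : Set G) := AuxIRS.normalizer_isClosed H hH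
  haveI : T2Space (G ⧸ (Subgroup.normalizer (H : Set G))) := AuxIRS.t2_quotient_of_isClosed (Subgroup.normalizer (H : Set G)) hN
  haveI : PolishSpace (G ⧸ (Subgroup.normalizer (H : Set G))) := AuxIRS.polishSpace_of_lcsc _
  haveI : BorelSpace (G ⧸ (Subgroup.normalizer (H : Set G))) := AuxIRS.borelSpace_quotient (Subgroup.normalizer (H : Set G)) hN
  haveI : T2Space (Chab G) := AuxIRS.t2_chab
  haveI : BorelSpace (Chab G) := ⟨rfl⟩
  set S : Set (Chab G) := {K : Chab G | ∃ g : G, K = conjChab g ⟨H, hH⟩} with hSdef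
  -- the orbit map
  let f : G ⧸ (Subgroup.normalizer (H : Set G)) → Chab G := fun x =>
    Quotient.liftOn' x (fun g => conjChab g (⟨H, hH⟩ : Chab G)) (by
      intro a b hab
      have hmem : a⁻¹ * b ∈ (Subgroup.normalizer (H : Set G)) := QuotientGroup.leftRel_apply.mp hab
      have h1 : conjChab (a⁻¹ * b) (⟨H, hH⟩ : Chab G) = ⟨H, hH⟩ :=
        AuxIRS.conjChab_fixed_iff.mpr hmem
      calc conjChab a (⟨H, hH⟩ : Chab G)
          = conjChab a (conjChab (a⁻¹ * b) (⟨H, hH⟩ : Chab G)) := by rw [h1]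
        _ = conjChab (a * (a⁻¹ * b)) (⟨H, hH⟩ : Chab G) := AuxIRS.conjChab_mul _ _ _
        _ = conjChab b (⟨H, hH⟩ : Chab G) := by rw [mul_inv_cancel_left])
  have hf_mk : ∀ g : G, f ((g : G ⧸ (Subgroup.normalizer (H : Set G)))) = conjChab g (⟨H, hH⟩ : Chab G) :=
    fun g => rfl
  have hf_cont : Continuous f := by
    rw [(QuotientGroup.isQuotientMap_mk (Subgroup.normalizer (H : Set G))).continuous_iff]
    exact AuxIRS.continuous_orbitMap H hH
  have hf_inj : Function.Injective f := by
    intro x y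
    refine Quotient.inductionOn₂' x y fun a b hab => ?_
    have h1 : conjChab (a⁻¹ * b) (⟨H, hH⟩ : Chab G) = (⟨H, hH⟩ : Chab G) := by
      have : conjChab a (⟨H, hH⟩ : Chab G) = conjChab b (⟨H, hH⟩ : Chab G) := hab
      exact (AuxIRS.conjChab_mul a⁻¹ b _).symm.trans
        ((congrArg (conjChab a⁻¹) this.symm).trans (AuxIRS.conjChab_inv_self a _))
    exact Quotient.sound' (QuotientGroup.leftRel_apply.mpr (AuxIRS.conjChab_fixed_iff.mp h1))
  have hf_equiv : ∀ (g : G) (x : G ⧸ (Subgroup.normalizer (H : Set G))), f (g • x) = conjChab g (f x) := by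
    intro g x
    refine Quotient.inductionOn' x fun a => ?_
    have h1 : g • ((a : G ⧸ (Subgroup.normalizer (H : Set G)))) = ((g * a : G) : G ⧸ (Subgroup.normalizer (H : Set G))) := by
      rw [← smul_eq_mul]
      exact MulAction.Quotient.smul_mk (Subgroup.normalizer (H : Set G)) g a
    show f (g • ((a : G ⧸ (Subgroup.normalizer (H : Set G))))) = conjChab g (f ((a : G ⧸ (Subgroup.normalizer (H : Set G)))))
    rw [h1, hf_mk, hf_mk]; exact (AuxIRS.conjChab_mul _ _ _).symm
  have hrange : Set.range f = S := by
    ext K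
    constructor
    · rintro ⟨x, rfl⟩
      refine Quotient.inductionOn' x fun a => ⟨a, rfl⟩
    · rintro ⟨g, rfl⟩
      exact ⟨(g : G ⧸ (Subgroup.normalizer (H : Set G))), rfl⟩
  constructor
  · rintro ⟨ν, hνprob, hνinv⟩
    have hfm : Measurable f := hf_cont.measurable
    haveI := hνprob
    refine ⟨ν.map f, Measure.isProbabilityMeasure_map hfm.aemeasurable, ?_, ?_⟩
    · intro g A hA
      have hpre : f ⁻¹' (conjChab g ⁻¹' A) = (fun x => g • x) ⁻¹' (f ⁻¹' A) := by
        ext x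
        simp only [Set.mem_preimage, hf_equiv]
      rw [Measure.map_apply hfm ((AuxIRS.continuous_conjChab g).measurable hA),
        Measure.map_apply hfm hA, hpre]
      exact hνinv g _ (hfm hA)
    · have hpreS : f ⁻¹' S = Set.univ := by
        rw [← hrange]
        exact Set.eq_univ_of_forall fun x => ⟨x, rfl⟩
      haveI : IsProbabilityMeasure (ν.map f) := Measure.isProbabilityMeasure_map hfm.aemeasurable
      refine le_antisymm prob_le_one ?_
      calc (1 : ENNReal) = ν (f ⁻¹' S) := by rw [hpreS, measure_univ]
        _ ≤ (ν.map f) S := Measure.le_map_apply hfm.aemeasurable S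
  · rintro ⟨μ, hμprob, hμinv, hμfull⟩
    haveI := hμprob
    have hemb : MeasurableEmbedding f := hf_cont.measurableEmbedding hf_inj
    refine ⟨μ.comap f, ?_, ?_⟩
    · constructor
      rw [hemb.comap_apply, Set.image_univ, hrange, hμfull]
    · intro g A hA
      rw [hemb.comap_apply, hemb.comap_apply]
      have himg : f '' ((fun x => g • x) ⁻¹' A) = conjChab g ⁻¹' (f '' A) := by
        ext y
        constructor
        · rintro ⟨x, hx, rfl⟩
          exact Set.mem_preimage.mpr ⟨g • x, hx, hf_equiv g x⟩
        · intro hy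
          obtain ⟨z, hzA, hz⟩ := Set.mem_preimage.mp hy
          have hyz : y = f (g⁻¹ • z) := by
            rw [hf_equiv, hz, AuxIRS.conjChab_inv_self]
          exact ⟨g⁻¹ • z, by simpa [Set.mem_preimage, smul_inv_smul] using hzA, hyz.symm⟩
      rw [himg]
      exact hμinv g _ (hemb.measurableSet_image' hA)
end

section
/- Let G be a locally compact, second countable, σ-compact group. Then the set C of compact subgroups of G is a Borel subset of the Chabauty space Sub(G); in fact C is a countable union of closed subsets of Sub(G). -/
open TopologicalSpace MeasureTheory

/-- in a locally compact, second countable, σ-compact group, the set of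
compact subgroups is Borel in the Chabauty space; in fact it is a countable union of
closed subsets. -/
theorem compactSubgroups_measurable
    (G : Type*) [Group G] [TopologicalSpace G] [IsTopologicalGroup G]
    [LocallyCompactSpace G] [SecondCountableTopology G] [SigmaCompactSpace G] :
    MeasurableSet {H : Chab G | IsCompact ((H.1 : Subgroup G) : Set G)} ∧
      ∃ F : ℕ → Set (Chab G), (∀ n, IsClosed (F n)) ∧
        {H : Chab G | IsCompact ((H.1 : Subgroup G) : Set G)} = ⋃ n, F n := by
  haveI : BorelSpace (Chab G) := ⟨rfl⟩
  -- a compact exhaustion, with each piece replaced by its (compact) closure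
  let K : CompactExhaustion G := CompactExhaustion.choice G
  set Kn : ℕ → Set G := fun n => closure (K n) with hKn
  have hKcomp : ∀ n, IsCompact (Kn n) := fun n => (K.isCompact n).closure
  have hKclosed : ∀ n, IsClosed (Kn n) := fun n => isClosed_closure
  -- the closed sets F n
  set F : ℕ → Set (Chab G) := fun n => {H : Chab G | (H.1 : Set G) ⊆ Kn n} with hF
  have hFclosed : ∀ n, IsClosed (F n) := by
    intro n
    rw [← isOpen_compl_iff]
    have : (F n)ᶜ = {H : Chab G | ((H.1 : Set G) ∩ (Kn n)ᶜ).Nonempty} := by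
      ext H
      simp only [hF, Set.mem_compl_iff, Set.mem_setOf_eq, Set.inter_compl_nonempty_iff]
    rw [this]
    exact TopologicalSpace.GenerateOpen.basic _
      (Or.inl ⟨(Kn n)ᶜ, (hKclosed n).isOpen_compl, rfl⟩)
  have hUnion : {H : Chab G | IsCompact ((H.1 : Subgroup G) : Set G)} = ⋃ n, F n := by
    ext H
    simp only [Set.mem_setOf_eq, Set.mem_iUnion, hF]
    constructor
    · intro hc
      obtain ⟨n, hn⟩ := K.exists_superset_of_isCompact hc
      exact ⟨n, hn.trans subset_closure⟩
    · rintro ⟨n, hn⟩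
      exact (hKcomp n).of_isClosed_subset H.2 hn
  refine ⟨?_, F, hFclosed, hUnion⟩
  rw [hUnion]
  exact MeasurableSet.iUnion fun n => (hFclosed n).measurableSet
end

section
/- Let G be a group acting properly and coboundedly by isometries on a metric space (X,d). Then the set B = {b ∈ G : the conjugacy class {g⁻¹bg : g ∈ G} has compact closure} equals the set of elements with uniformly bounded displacement: B = {b ∈ G : ∃ N > 0, ∀ x ∈ X, d(bx, x) < N}. -/
/-- if a (locally compact second countable) group `G` acts properly and
coboundedly by isometries on a metric space `X`, then the set of elements with
relatively compact conjugacy class coincides with the set of elements of uniformly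
bounded displacement. -/
theorem relatively_compact_conjugacy_class_iff_bounded_displacement
    {G X : Type*} [Group G] [TopologicalSpace G] [IsTopologicalGroup G]
    [LocallyCompactSpace G] [SecondCountableTopology G]
    [MetricSpace X] [MulAction G X] [ContinuousSMul G X]
    (hiso : ∀ g : G, Isometry (fun z : X => g • z))
    (hcobounded : ∃ y : X, ∃ R : ℝ, 0 < R ∧ ∀ x : X, ∃ g : G, dist (g • x) y < R)
    (hproper : ∀ B : Set X, Bornology.IsBounded B →
      IsCompact (closure {g : G | (((fun z : X => g • z) '' B) ∩ B).Nonempty})) :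
    {b : G | IsCompact (closure {c : G | ∃ g : G, c = g⁻¹ * b * g})} =
      {b : G | ∃ N : ℝ, 0 < N ∧ ∀ x : X, dist (b • x) x < N} := by
  obtain ⟨y, R, hR, hcb⟩ := hcobounded
  ext b
  simp only [Set.mem_setOf_eq]
  constructor
  · intro hK
    have hbmem : b ∈ closure {c : G | ∃ g : G, c = g⁻¹ * b * g} :=
      subset_closure ⟨1, by group⟩
    have hcont : Continuous fun k : G => dist (k • y) y :=
      (continuous_id.smul continuous_const).dist continuous_const
    obtain ⟨k0, _, hk0⟩ := hK.exists_isMaxOn ⟨b, hbmem⟩ hcont.continuousOn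
    set M : ℝ := dist (k0 • y) y with hMdef
    refine ⟨2 * R + M, by positivity, fun x => ?_⟩
    obtain ⟨g, hg⟩ := hcb x
    have hc : (g * b * g⁻¹) ∈ closure {c : G | ∃ g : G, c = g⁻¹ * b * g} :=
      subset_closure ⟨g⁻¹, by group⟩
    have hM : dist ((g * b * g⁻¹) • y) y ≤ M := hk0 hc
    have key : dist (b • x) x = dist ((g * b * g⁻¹) • (g • x)) (g • x) := by
      rw [smul_smul]
      have : g * b * g⁻¹ * g = g * b := by group
      rw [this, mul_smul]
      exact ((hiso g).dist_eq (b • x) x).symm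
    calc dist (b • x) x
        = dist ((g * b * g⁻¹) • (g • x)) (g • x) := key
      _ ≤ dist ((g * b * g⁻¹) • (g • x)) ((g * b * g⁻¹) • y)
            + dist ((g * b * g⁻¹) • y) y + dist y (g • x) := dist_triangle4 _ _ _ _
      _ = dist (g • x) y + dist ((g * b * g⁻¹) • y) y + dist y (g • x) := by
            rw [(hiso (g * b * g⁻¹)).dist_eq]
      _ < R + M + R := by
            have := dist_comm y (g • x)
            linarith [hg, hM, this ▸ hg]
      _ = 2 * R + M := by ring
  · rintro ⟨N, hN, hNd⟩
    have hball : Bornology.IsBounded (Metric.closedBall y N) :=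
      Metric.isBounded_closedBall
    have hsub : {c : G | ∃ g : G, c = g⁻¹ * b * g} ⊆
        {g : G | (((fun z : X => g • z) '' Metric.closedBall y N) ∩
          Metric.closedBall y N).Nonempty} := by
      rintro c ⟨g, rfl⟩
      have hdisp : dist ((g⁻¹ * b * g) • y) y < N := by
        have key : dist ((g⁻¹ * b * g) • y) y = dist (b • (g • y)) (g • y) := by
          have : dist ((g⁻¹ * b * g) • y) y
              = dist (g • ((g⁻¹ * b * g) • y)) (g • y) := ((hiso g).dist_eq _ _).symm
          rw [this, smul_smul, smul_smul]
          have h2 : g * (g⁻¹ * b * g) = b * g := by group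
          rw [h2, mul_smul]
        rw [key]; exact hNd _
      refine ⟨(g⁻¹ * b * g) • y, ⟨y, ?_, rfl⟩, ?_⟩
      · simp [Metric.mem_closedBall, hN.le]
      · exact Metric.mem_closedBall.2 hdisp.le
    exact (hproper _ hball).of_isClosed_subset isClosed_closure
      (closure_mono hsub)
end

section
/- Let G be a locally compact group which is an ascending union G = ⋃ₙ Oₙ of open subgroups O₀ ⊆ O₁ ⊆ ⋯. Then the locally elliptic radical satisfies E(G) = ⋃_{k ∈ ℕ} ⋂_{n ≥ k} E(Oₙ), where E(H) denotes the locally elliptic radical of H. -/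
/-- A subgroup is locally elliptic if each of its compact subsets is contained in a
compact subgroup of it. -/
def IsLocallyElliptic {G : Type*} [Group G] [TopologicalSpace G] (H : Subgroup G) : Prop :=
  ∀ K : Set G, K ⊆ (H : Set G) → IsCompact K →
    ∃ C : Subgroup G, C ≤ H ∧ IsCompact ((C : Subgroup G) : Set G) ∧ K ⊆ (C : Set G)

/-- `E` is the locally elliptic radical of the subgroup `O`: it is a closed, locally
elliptic subgroup of `O`, normalized by `O`, containing every locally elliptic
subgroup of `O` normalized by `O`. -/
def IsLocallyEllipticRadicalOf {G : Type*} [Group G] [TopologicalSpace G]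
    (E O : Subgroup G) : Prop :=
  E ≤ O ∧ IsClosed ((E : Subgroup G) : Set G) ∧
    (∀ g ∈ O, ∀ x ∈ E, g * x * g⁻¹ ∈ E) ∧ IsLocallyElliptic E ∧
    ∀ N : Subgroup G, N ≤ O → (∀ g ∈ O, ∀ x ∈ N, g * x * g⁻¹ ∈ N) →
      IsLocallyElliptic N → N ≤ E

section Aux

variable {G : Type*} [Group G] [TopologicalSpace G] [IsTopologicalGroup G]

/-- Key lemma: if `O' ≤ Op` is open, `EO` is the radical of `Op` and `E'` that of `O'`,
then `EO ⊓ O' ≤ E'`. -/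
lemma radical_inf_le {EO Op E' O' : Subgroup G} (hO' : IsOpen ((O' : Subgroup G) : Set G))
    (hle : O' ≤ Op) (h : IsLocallyEllipticRadicalOf EO Op)
    (h' : IsLocallyEllipticRadicalOf E' O') : EO ⊓ O' ≤ E' := by
  obtain ⟨hEle, _, hnorm, hell, _⟩ := h
  refine h'.2.2.2.2 (EO ⊓ O') inf_le_right ?_ ?_
  · intro g hg x hx
    rw [Subgroup.mem_inf] at hx ⊢
    exact ⟨hnorm g (hle hg) x hx.1, mul_mem (mul_mem hg hx.2) (inv_mem hg)⟩
  · intro K hK hKc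
    have hK1 : K ⊆ (EO : Set G) := fun x hx => ((Subgroup.mem_inf).1 (hK hx)).1
    have hK2 : K ⊆ (O' : Set G) := fun x hx => ((Subgroup.mem_inf).1 (hK hx)).2
    obtain ⟨C, hCle, hCc, hKC⟩ := hell K hK1 hKc
    refine ⟨C ⊓ O', inf_le_inf_right _ hCle, ?_, ?_⟩
    · have : ((C ⊓ O' : Subgroup G) : Set G) = (C : Set G) ∩ (O' : Set G) := rfl
      rw [this]
      exact hCc.inter_right (O'.isClosed_of_isOpen hO')
    · intro x hx
      exact (Subgroup.mem_inf).2 ⟨hKC hx, hK2 hx⟩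

end Aux

/-- if a locally compact group `G` is the ascending union of open
subgroups `Oₙ`, then `E(G) = ⋃ₖ ⋂_{n ≥ k} E(Oₙ)`, where `E` denotes the locally
elliptic radical. -/
theorem locallyEllipticRadical_of_ascending_union
    (G : Type*) [Group G] [TopologicalSpace G] [IsTopologicalGroup G]
    [LocallyCompactSpace G]
    (O : ℕ → Subgroup G) (hopen : ∀ n, IsOpen ((O n : Subgroup G) : Set G))
    (hmono : Monotone O) (hunion : ∀ g : G, ∃ n, g ∈ O n)
    (E : ℕ → Subgroup G) (hE : ∀ n, IsLocallyEllipticRadicalOf (E n) (O n))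
    (EG : Subgroup G) (hEG : IsLocallyEllipticRadicalOf EG ⊤) :
    ((EG : Subgroup G) : Set G) =
      ⋃ k : ℕ, ⋂ n ∈ {n : ℕ | k ≤ n}, ((E n : Subgroup G) : Set G) := by
  -- membership description of the RHS
  have hmem : ∀ x : G, (x ∈ ⋃ k : ℕ, ⋂ n ∈ {n : ℕ | k ≤ n}, ((E n : Subgroup G) : Set G)) ↔
      ∃ k, ∀ n, k ≤ n → x ∈ E n := by
    intro x
    simp [Set.mem_iUnion, Set.mem_iInter]
  -- any compact subset of G is contained in some O m
  have hcover : ∀ K : Set G, IsCompact K → ∃ m, K ⊆ (O m : Set G) := by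
    intro K hKc
    refine hKc.elim_directed_cover (fun n => ((O n : Subgroup G) : Set G)) hopen ?_ ?_
    · intro x _
      obtain ⟨n, hn⟩ := hunion x
      exact Set.mem_iUnion.2 ⟨n, hn⟩
    · intro a b
      exact ⟨max a b, hmono (le_max_left a b), hmono (le_max_right a b)⟩
  -- the union of the A_k as a subgroup N
  let N : Subgroup G :=
    { carrier := {x | ∃ k, ∀ n, k ≤ n → x ∈ E n}
      one_mem' := ⟨0, fun n _ => (E n).one_mem⟩
      mul_mem' := by
        rintro x y ⟨j, hj⟩ ⟨k, hk⟩
        exact ⟨max j k, fun n hn => (E n).mul_mem (hj n ((le_max_left j k).trans hn))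
          (hk n ((le_max_right j k).trans hn))⟩
      inv_mem' := by
        rintro x ⟨k, hk⟩
        exact ⟨k, fun n hn => (E n).inv_mem (hk n hn)⟩ }
  have hNmem : ∀ x : G, x ∈ N ↔ ∃ k, ∀ n, k ≤ n → x ∈ E n := fun _ => Iff.rfl
  -- N ∩ O m ⊆ A_m
  have hNO : ∀ m, ∀ x ∈ N, x ∈ O m → ∀ n, m ≤ n → x ∈ E n := by
    intro m x hx hxm n hn
    obtain ⟨k, hk⟩ := hx
    rcases le_or_gt k n with h | h
    · exact hk n h
    · -- n < k : use the key lemma with Op = O k, O' = O n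
      have hxk : x ∈ E k := hk k le_rfl
      have hxn : x ∈ O n := hmono hn hxm
      exact radical_inf_le (hopen n) (hmono h.le) (hE k) (hE n)
        ((Subgroup.mem_inf).2 ⟨hxk, hxn⟩)
  -- N is normalized by all of G
  have hNnorm : ∀ g : G, ∀ x ∈ N, g * x * g⁻¹ ∈ N := by
    intro g x hx
    obtain ⟨m, hm⟩ := hunion g
    obtain ⟨k, hk⟩ := hx
    refine ⟨max k m, fun n hn => ?_⟩
    exact (hE n).2.2.1 g (hmono ((le_max_right k m).trans hn) hm) x
      (hk n ((le_max_left k m).trans hn))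
  -- N is locally elliptic
  have hNell : IsLocallyElliptic N := by
    intro K hK hKc
    obtain ⟨m, hKm⟩ := hcover K hKc
    have hKE : ∀ n, m ≤ n → K ⊆ (E n : Set G) := fun n hn x hx =>
      hNO m x (hK hx) (hKm hx) n hn
    obtain ⟨C, hCle, hCc, hKC⟩ := (hE m).2.2.2.1 K (hKE m le_rfl) hKc
    -- A_m as a closed subgroup
    let A : Subgroup G := ⨅ n ∈ {n : ℕ | m ≤ n}, E n
    have hAmem : ∀ x : G, x ∈ A ↔ ∀ n, m ≤ n → x ∈ E n := by
      intro x
      simp [A, Subgroup.mem_iInf]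
    have hAclosed : IsClosed ((A : Subgroup G) : Set G) := by
      have : ((A : Subgroup G) : Set G) = ⋂ n ∈ {n : ℕ | m ≤ n}, ((E n : Subgroup G) : Set G) := by
        ext x
        simp [hAmem x, Set.mem_iInter]
      rw [this]
      exact isClosed_biInter fun n _ => (hE n).2.1
    refine ⟨C ⊓ A, ?_, ?_, ?_⟩
    · intro x hx
      rw [Subgroup.mem_inf] at hx
      exact ⟨m, fun n hn => (hAmem x).1 hx.2 n hn⟩
    · have : ((C ⊓ A : Subgroup G) : Set G) = (C : Set G) ∩ (A : Set G) := rfl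
      rw [this]
      exact hCc.inter_right hAclosed
    · intro x hx
      exact (Subgroup.mem_inf).2 ⟨hKC hx, (hAmem x).2 fun n hn => hKE n hn hx⟩
  -- conclude
  ext x
  rw [hmem]
  constructor
  · intro hx
    obtain ⟨k, hk⟩ := hunion x
    refine ⟨k, fun n hn => ?_⟩
    exact radical_inf_le (hopen n) le_top hEG (hE n)
      ((Subgroup.mem_inf).2 ⟨hx, hmono hn hk⟩)
  · intro hx
    exact hEG.2.2.2.2 N le_top (fun g _ x hx => hNnorm g x hx) hNell hx
end

section
/- Let G be a locally compact second countable group and μ a compact invariant random subgroup of G (conjugation-invariant Borel probability measure on Sub(G) concentrated on compact subgroups). Define ν(A) = ∫_{Sub(G)} m_H(A ∩ H) dμ(H), where m_H is the normalized Haar probability measure of the compact group H (viewed as a measure on G). Then ν is a conjugation-invariant Borel probability measure on G, and ⋃ supp(μ) ⊆ supp(ν). -/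
open MeasureTheory

/-- The support of a measure: points all of whose open neighbourhoods have positive
measure. -/
def msupport {Y : Type*} [TopologicalSpace Y] [MeasurableSpace Y]
    (μ : Measure Y) : Set Y :=
  {y : Y | ∀ U : Set Y, IsOpen U → y ∈ U → 0 < μ U}

section Aux
variable {G : Type*} [Group G] [TopologicalSpace G] [IsTopologicalGroup G]
  [MeasurableSpace G] [BorelSpace G]

lemma measure_subgroup_eq_one (S : Subgroup G) (hSm : MeasurableSet (S : Set G))
    (mH : Measure G) [IsProbabilityMeasure mH] (hsupp : mH ((S : Set G))ᶜ = 0) :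
    mH (S : Set G) = 1 := by
  have h := measure_add_measure_compl (μ := mH) hSm
  rwa [hsupp, add_zero, measure_univ] at h

lemma haar_uniq_aux [SecondCountableTopology G] (S : Subgroup G)
    (hSm : MeasurableSet (S : Set G))
    (lam rho : Measure G) [IsProbabilityMeasure lam] [IsProbabilityMeasure rho]
    (hl0 : lam ((S : Set G))ᶜ = 0) (hr0 : rho ((S : Set G))ᶜ = 0)
    (hl : ∀ k ∈ S, ∀ A : Set G, MeasurableSet A → lam ((fun x => k * x) ⁻¹' A) = lam A)
    (hr : ∀ k ∈ S, ∀ A : Set G, MeasurableSet A → rho ((fun x => k * x) ⁻¹' A) = rho A)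
    (B : Set G) (hB : MeasurableSet B) :
    Measure.map (fun x : G => x⁻¹) lam B = rho B := by
  set lami := Measure.map (fun x : G => x⁻¹) lam with hlamidef
  haveI : IsProbabilityMeasure lami := Measure.isProbabilityMeasure_map measurable_inv.aemeasurable
  have hlami_apply : ∀ C : Set G, MeasurableSet C →
      lami C = lam ((fun x : G => x⁻¹) ⁻¹' C) :=
    fun C hC => Measure.map_apply measurable_inv hC
  -- a.e. membership in S
  have haer : ∀ᵐ y ∂rho, y ∈ (S : Set G) := by
    rw [ae_iff]
    have : {y : G | ¬ y ∈ (S : Set G)} = ((S : Set G))ᶜ := rfl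
    rw [this]; exact hr0
  have hael : ∀ᵐ x ∂lami, x ∈ (S : Set G) := by
    rw [ae_iff]
    have h1 : {x : G | ¬ x ∈ (S : Set G)} = (fun x : G => x⁻¹) ⁻¹' ((S : Set G))ᶜ := by
      ext x
      simp [Set.mem_preimage]
    rw [h1, hlami_apply _ (hSm.compl.preimage measurable_inv)]
    have h2 : (fun x : G => x⁻¹) ⁻¹' ((fun x : G => x⁻¹) ⁻¹' ((S : Set G))ᶜ)
        = ((S : Set G))ᶜ := by ext x; simp
    rw [h2]; exact hl0
  -- the double integral
  have hf : Measurable (fun p : G × G =>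
      B.indicator (fun _ => (1 : ENNReal)) (p.2 * p.1)) :=
    (measurable_one.indicator hB).comp (measurable_snd.mul measurable_fst)
  have step1 : ∀ y ∈ (S : Set G),
      (∫⁻ x, B.indicator (fun _ => (1 : ENNReal)) (x * y) ∂lami) = lami B := by
    intro y hy
    have hBy : MeasurableSet ((fun x : G => x * y) ⁻¹' B) := (measurable_mul_const y) hB
    have e1 : (∫⁻ x, B.indicator (fun _ => (1 : ENNReal)) (x * y) ∂lami)
        = lami ((fun x : G => x * y) ⁻¹' B) := by
      rw [← lintegral_indicator_one hBy]
      refine lintegral_congr fun x => ?_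
      by_cases h : x * y ∈ B <;> simp [Set.indicator, h]
    rw [e1, hlami_apply _ hBy]
    have hS' : MeasurableSet ((fun x : G => x⁻¹ * y) ⁻¹' B) :=
      (measurable_inv.mul_const y) hB
    have hset2 : (fun x : G => x⁻¹) ⁻¹' ((fun x : G => x * y) ⁻¹' B)
        = (fun x : G => x⁻¹ * y) ⁻¹' B := by ext x; simp
    rw [hset2]
    have hkey := hl y hy _ hS'
    have hset : (fun x : G => y * x) ⁻¹' ((fun x : G => x⁻¹ * y) ⁻¹' B)
        = (fun x : G => x⁻¹) ⁻¹' B := by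
      ext x
      simp [Set.mem_preimage, mul_assoc]
    rw [hset] at hkey
    rw [hlami_apply _ hB]
    exact hkey.symm
  have step4 : ∀ x ∈ (S : Set G),
      (∫⁻ y, B.indicator (fun _ => (1 : ENNReal)) (x * y) ∂rho) = rho B := by
    intro x hx
    have hBx : MeasurableSet ((fun y : G => x * y) ⁻¹' B) := (measurable_const_mul x) hB
    have e1 : (∫⁻ y, B.indicator (fun _ => (1 : ENNReal)) (x * y) ∂rho)
        = rho ((fun y : G => x * y) ⁻¹' B) := by
      rw [← lintegral_indicator_one hBx]
      refine lintegral_congr fun y => ?_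
      by_cases h : x * y ∈ B <;> simp [Set.indicator, h]
    rw [e1, hr x hx B hB]
  -- combine via Fubini
  have swap : ∫⁻ y, ∫⁻ x, B.indicator (fun _ => (1 : ENNReal)) (x * y) ∂lami ∂rho
      = ∫⁻ x, ∫⁻ y, B.indicator (fun _ => (1 : ENNReal)) (x * y) ∂rho ∂lami := by
    exact lintegral_lintegral_swap (μ := rho) (ν := lami)
      (f := fun y x => B.indicator (fun _ => (1 : ENNReal)) (x * y)) hf.aemeasurable
  have left : ∫⁻ y, ∫⁻ x, B.indicator (fun _ => (1 : ENNReal)) (x * y) ∂lami ∂rho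
      = lami B := by
    rw [lintegral_congr_ae (haer.mono fun y hy => step1 y hy)]
    simp
  have right : ∫⁻ x, ∫⁻ y, B.indicator (fun _ => (1 : ENNReal)) (x * y) ∂rho ∂lami
      = rho B := by
    rw [lintegral_congr_ae (hael.mono fun x hx => step4 x hx)]
    simp
  rw [← left, swap, right]

lemma haar_eq [SecondCountableTopology G] (S : Subgroup G)
    (hSm : MeasurableSet (S : Set G))
    (lam rho : Measure G) [IsProbabilityMeasure lam] [IsProbabilityMeasure rho]
    (hl0 : lam ((S : Set G))ᶜ = 0) (hr0 : rho ((S : Set G))ᶜ = 0)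
    (hl : ∀ k ∈ S, ∀ A : Set G, MeasurableSet A → lam ((fun x => k * x) ⁻¹' A) = lam A)
    (hr : ∀ k ∈ S, ∀ A : Set G, MeasurableSet A → rho ((fun x => k * x) ⁻¹' A) = rho A)
    (B : Set G) (hB : MeasurableSet B) : lam B = rho B := by
  have h1 := haar_uniq_aux S hSm lam lam hl0 hl0 hl hl B hB
  have h2 := haar_uniq_aux S hSm lam rho hl0 hr0 hl hr B hB
  rw [← h1, h2]

lemma haar_pos (S : Subgroup G) (hSm : MeasurableSet (S : Set G))
    (hSc : IsCompact (S : Set G)) (mH : Measure G) [IsProbabilityMeasure mH]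
    (hsupp : mH ((S : Set G))ᶜ = 0)
    (hinv : ∀ h ∈ S, ∀ A : Set G, MeasurableSet A → mH ((fun x => h * x) ⁻¹' A) = mH A)
    (U : Set G) (hU : IsOpen U) (hne : ((S : Set G) ∩ U).Nonempty) :
    0 < mH ((S : Set G) ∩ U) := by
  obtain ⟨u, huS, huU⟩ := hne
  set W : S → Set G := fun i => (fun x => (i : G)⁻¹ * x) ⁻¹' U with hW
  have hWopen : ∀ i : S, IsOpen (W i) := fun i => hU.preimage (continuous_mul_left _)
  have hcover : (S : Set G) ⊆ ⋃ i : S, W i := by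
    intro y hy
    refine Set.mem_iUnion.mpr ⟨⟨y * u⁻¹, mul_mem hy (inv_mem huS)⟩, ?_⟩
    show (y * u⁻¹)⁻¹ * y ∈ U
    simpa [mul_assoc] using huU
  obtain ⟨t, ht⟩ := hSc.elim_finite_subcover W hWopen hcover
  by_contra hcon
  push_neg at hcon
  have h0 : mH ((S : Set G) ∩ U) = 0 := le_antisymm hcon zero_le
  have hSone : mH (S : Set G) = 1 := measure_subgroup_eq_one S hSm mH hsupp
  have hWmeas : ∀ i : S, MeasurableSet (W i) := fun i =>
    (measurable_const_mul _) hU.measurableSet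
  have hterm : ∀ i : S, mH ((S : Set G) ∩ W i) = 0 := by
    intro i
    have hAmeas : MeasurableSet ((S : Set G) ∩ W i) := hSm.inter (hWmeas i)
    have := hinv (i : G) i.2 _ hAmeas
    have hset : (fun x => (i : G) * x) ⁻¹' ((S : Set G) ∩ W i) = (S : Set G) ∩ U := by
      ext x
      simp only [Set.mem_preimage, Set.mem_inter_iff, hW]
      constructor
      · rintro ⟨h1, h2⟩
        refine ⟨(mul_mem_cancel_left i.2).mp h1, ?_⟩
        simpa [mul_assoc] using h2
      · rintro ⟨h1, h2⟩
        exact ⟨mul_mem i.2 h1, by simpa [mul_assoc] using h2⟩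
    rw [hset, h0] at this
    exact this.symm
  have hle : mH (S : Set G) ≤ ∑ i ∈ t, mH ((S : Set G) ∩ W i) := by
    calc mH (S : Set G) ≤ mH (⋃ i ∈ t, (S : Set G) ∩ W i) := by
          refine measure_mono fun y hy => ?_
          obtain ⟨i, hit, hyW⟩ := Set.mem_iUnion₂.mp (ht hy)
          exact Set.mem_iUnion₂.mpr ⟨i, hit, hy, hyW⟩
      _ ≤ ∑ i ∈ t, mH ((S : Set G) ∩ W i) := measure_biUnion_finset_le t _
  rw [hSone] at hle
  simp [hterm] at hle

end Aux

section ChabAux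
variable {G : Type*} [Group G] [TopologicalSpace G] [IsTopologicalGroup G]

instance chabBorel : BorelSpace (Chab G) := ⟨rfl⟩

/-- The conjugation homeomorphism. -/
def cHomeo (g : G) : G ≃ₜ G := (Homeomorph.mulLeft g).trans (Homeomorph.mulRight g⁻¹)

lemma cHomeo_apply (g x : G) : cHomeo g x = g * x * g⁻¹ := rfl

lemma conjChab_coe (g : G) (H : Chab G) :
    (((conjChab g H).1 : Subgroup G) : Set G)
      = (fun x => g * x * g⁻¹) '' ((H.1 : Subgroup G) : Set G) := by
  show ((H.1.map (MulAut.conj g).toMonoidHom : Subgroup G) : Set G) = _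
  rw [Subgroup.coe_map]
  congr 1

lemma conjChab_continuous (g : G) : Continuous (conjChab (G := G) g) := by
  have hc : Continuous (fun x : G => g * x * g⁻¹) := (cHomeo g).continuous
  refine continuous_generateFrom_iff.mpr ?_
  rintro s (⟨V, hV, rfl⟩ | ⟨K, hK, rfl⟩)
  · have hpre : conjChab g ⁻¹' {H : Chab G | ((H.1 : Set G) ∩ V).Nonempty}
        = {H : Chab G | ((H.1 : Set G) ∩ ((fun x => g * x * g⁻¹) ⁻¹' V)).Nonempty} := by
      ext H
      simp only [Set.mem_preimage, Set.mem_setOf_eq, conjChab_coe]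
      constructor
      · rintro ⟨y, ⟨x, hx, rfl⟩, hyV⟩; exact ⟨x, hx, hyV⟩
      · rintro ⟨x, hx, hxV⟩; exact ⟨_, ⟨x, hx, rfl⟩, hxV⟩
    rw [hpre]
    exact TopologicalSpace.isOpen_generateFrom_of_mem
      (Or.inl ⟨_, hV.preimage hc, rfl⟩)
  · have hpre : conjChab g ⁻¹' {H : Chab G | (H.1 : Set G) ∩ K = ∅}
        = {H : Chab G | (H.1 : Set G) ∩ ((fun x => g * x * g⁻¹) ⁻¹' K) = ∅} := by
      ext H
      simp only [Set.mem_preimage, Set.mem_setOf_eq, conjChab_coe,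
        Set.eq_empty_iff_forall_notMem]
      constructor
      · intro h x hx
        exact h (g * x * g⁻¹) ⟨⟨x, hx.1, rfl⟩, hx.2⟩
      · intro h y hy
        obtain ⟨⟨x, hx, rfl⟩, hyK⟩ := hy
        exact h x ⟨hx, hyK⟩
    rw [hpre]
    have hKc : IsCompact ((fun x => g * x * g⁻¹) ⁻¹' K) :=
      (cHomeo g).isCompact_preimage.mpr hK
    exact TopologicalSpace.isOpen_generateFrom_of_mem
      (Or.inr ⟨_, hKc, rfl⟩)

end ChabAux

/-- if `μ` is a compact IRS of a locally compact second countable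
group `G`, and `H ↦ m H` assigns (measurably) to each compact subgroup its
normalized Haar probability measure viewed on `G`, then
`ν(A) = ∫ m_H (A ∩ H) dμ(H)` defines a conjugation-invariant Borel probability
measure on `G`, and `⋃ supp μ ⊆ supp ν`. -/
theorem averaged_haar_measure_of_compact_irs
    (G : Type*) [Group G] [TopologicalSpace G] [IsTopologicalGroup G]
    [LocallyCompactSpace G] [SecondCountableTopology G]
    [MeasurableSpace G] [BorelSpace G]
    (μ : Measure (Chab G)) [IsProbabilityMeasure μ]
    (hinv : ∀ g : G, ∀ A : Set (Chab G), MeasurableSet A →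
      μ (conjChab g ⁻¹' A) = μ A)
    (hcompact : μ {H : Chab G | IsCompact ((H.1 : Subgroup G) : Set G)} = 1)
    (m : Chab G → Measure G)
    (hm_prob : ∀ H : Chab G, IsCompact ((H.1 : Subgroup G) : Set G) →
      IsProbabilityMeasure (m H))
    (hm_supp : ∀ H : Chab G, IsCompact ((H.1 : Subgroup G) : Set G) →
      m H (((H.1 : Subgroup G) : Set G)ᶜ) = 0)
    (hm_haar : ∀ H : Chab G, IsCompact ((H.1 : Subgroup G) : Set G) →
      ∀ h ∈ (H.1 : Subgroup G), ∀ A : Set G, MeasurableSet A →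
        m H ((fun x => h * x) ⁻¹' A) = m H A)
    (hm_meas : ∀ A : Set G, MeasurableSet A →
      Measurable (fun H : Chab G => m H (((H.1 : Subgroup G) : Set G) ∩ A))) :
    ∃ ν : Measure G, IsProbabilityMeasure ν ∧
      (∀ A : Set G, MeasurableSet A →
        ν A = ∫⁻ H, m H (((H.1 : Subgroup G) : Set G) ∩ A) ∂μ) ∧
      (∀ g : G, ∀ A : Set G, MeasurableSet A →
        ν ((fun x => g * x * g⁻¹) ⁻¹' A) = ν A) ∧
      (⋃ H ∈ msupport μ, ((H.1 : Subgroup G) : Set G)) ⊆ msupport ν := by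
  classical
  -- any measurable set of non-compact subgroups is null
  have hnull : ∀ T : Set (Chab G), MeasurableSet T →
      (∀ H ∈ T, ¬ IsCompact ((H.1 : Subgroup G) : Set G)) → μ T = 0 := by
    intro T hT hdisj
    have h1 : {H : Chab G | IsCompact ((H.1 : Subgroup G) : Set G)} ⊆ Tᶜ :=
      fun H hH hHT => hdisj H hHT hH
    have h2 : (1 : ENNReal) ≤ μ Tᶜ := hcompact ▸ measure_mono h1
    have h3 : μ T + μ Tᶜ = 1 := by rw [measure_add_measure_compl hT, measure_univ]
    have h4 : μ T + 1 ≤ μ T + μ Tᶜ := add_le_add_right h2 _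
    rw [h3] at h4
    have h5 : μ T + 1 ≤ 0 + 1 := by simpa using h4
    exact le_antisymm ((ENNReal.add_le_add_iff_right ENNReal.one_ne_top).mp h5) zero_le
  have hone : ∀ H : Chab G, IsCompact ((H.1 : Subgroup G) : Set G) →
      m H ((H.1 : Subgroup G) : Set G) = 1 := by
    intro H hc
    haveI := hm_prob H hc
    exact measure_subgroup_eq_one H.1 H.2.measurableSet (m H) (hm_supp H hc)
  -- the measure ν
  set ν : Measure G := Measure.ofMeasurable
    (fun A _ => ∫⁻ H, m H (((H.1 : Subgroup G) : Set G) ∩ A) ∂μ)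
    (by simp)
    (by
      intro f hf hdisj
      have h1 : ∀ H : Chab G, m H (((H.1 : Subgroup G) : Set G) ∩ ⋃ i, f i)
          = ∑' i, m H (((H.1 : Subgroup G) : Set G) ∩ f i) := by
        intro H
        rw [Set.inter_iUnion]
        exact measure_iUnion
          (fun i j hij => (hdisj hij).mono Set.inter_subset_right Set.inter_subset_right)
          (fun i => H.2.measurableSet.inter (hf i))
      simp only [h1]
      exact lintegral_tsum fun i => (hm_meas _ (hf i)).aemeasurable) with hνdef
  have hνap : ∀ A : Set G, MeasurableSet A →
      ν A = ∫⁻ H, m H (((H.1 : Subgroup G) : Set G) ∩ A) ∂μ :=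
    fun A hA => Measure.ofMeasurable_apply A hA
  -- probability
  have hνuniv : ν Set.univ = 1 := by
    rw [hνap _ MeasurableSet.univ]
    have hTmeas : MeasurableSet {H : Chab G |
        ¬ m H (((H.1 : Subgroup G) : Set G) ∩ Set.univ) = 1} :=
      ((hm_meas _ MeasurableSet.univ) (measurableSet_singleton 1)).compl
    have hae : ∀ᵐ H ∂μ, m H (((H.1 : Subgroup G) : Set G) ∩ Set.univ) = 1 := by
      rw [ae_iff]
      exact hnull _ hTmeas fun H hH hc => hH (by rw [Set.inter_univ]; exact hone H hc)
    rw [lintegral_congr_ae hae, lintegral_one, measure_univ]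
  refine ⟨ν, ⟨hνuniv⟩, hνap, ?_, ?_⟩
  · -- conjugation invariance
    intro g A hA
    have hc_cont : Continuous (fun x : G => g * x * g⁻¹) := (cHomeo g).continuous
    have hc_meas : Measurable (fun x : G => g * x * g⁻¹) := hc_cont.measurable
    have hA' : MeasurableSet ((fun x : G => g * x * g⁻¹) ⁻¹' A) := hc_meas hA
    rw [hνap _ hA', hνap _ hA]
    have hcm : Measurable (conjChab (G := G) g) := (conjChab_continuous g).measurable
    have hmap : μ.map (conjChab g) = μ := by
      refine Measure.ext fun s hs => ?_
      rw [Measure.map_apply hcm hs, hinv g s hs]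
    have hstepA : ∫⁻ H, m H (((H.1 : Subgroup G) : Set G) ∩ A) ∂μ
        = ∫⁻ H, m (conjChab g H)
            ((((conjChab g H).1 : Subgroup G) : Set G) ∩ A) ∂μ := by
      conv_lhs => rw [← hmap]
      exact lintegral_map (hm_meas A hA) hcm
    rw [hstepA]
    -- pointwise equality on compact subgroups
    have key : ∀ H : Chab G, IsCompact ((H.1 : Subgroup G) : Set G) →
        m (conjChab g H) ((((conjChab g H).1 : Subgroup G) : Set G) ∩ A)
          = m H (((H.1 : Subgroup G) : Set G) ∩ ((fun x : G => g * x * g⁻¹) ⁻¹' A)) := by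
      intro H hHc
      set K := conjChab g H with hKdef
      have hKcoe : ((K.1 : Subgroup G) : Set G)
          = (fun x : G => g * x * g⁻¹) '' ((H.1 : Subgroup G) : Set G) := conjChab_coe g H
      have hKc : IsCompact ((K.1 : Subgroup G) : Set G) := by
        rw [hKcoe]; exact hHc.image hc_cont
      haveI := hm_prob H hHc
      haveI := hm_prob K hKc
      set lam := Measure.map (fun x : G => g * x * g⁻¹) (m H) with hlamdef
      haveI : IsProbabilityMeasure lam := Measure.isProbabilityMeasure_map hc_meas.aemeasurable
      have hcinj : Function.Injective (fun x : G => g * x * g⁻¹) := (cHomeo g).injective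
      have hKpre : (fun x : G => g * x * g⁻¹) ⁻¹' ((K.1 : Subgroup G) : Set G)
          = ((H.1 : Subgroup G) : Set G) := by
        rw [hKcoe, Set.preimage_image_eq _ hcinj]
      have hlam_apply : ∀ C : Set G, MeasurableSet C →
          lam C = m H ((fun x : G => g * x * g⁻¹) ⁻¹' C) :=
        fun C hC => Measure.map_apply hc_meas hC
      have hl0 : lam (((K.1 : Subgroup G) : Set G))ᶜ = 0 := by
        rw [hlam_apply _ K.2.measurableSet.compl, Set.preimage_compl, hKpre]
        exact hm_supp H hHc
      have hl : ∀ k ∈ K.1, ∀ A' : Set G, MeasurableSet A' →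
          lam ((fun x => k * x) ⁻¹' A') = lam A' := by
        intro k hk A' hA'2
        obtain ⟨h, hh, rfl⟩ := Subgroup.mem_map.mp hk
        rw [hlam_apply _ ((measurable_const_mul _) hA'2), hlam_apply _ hA'2]
        have hset : (fun x : G => g * x * g⁻¹) ⁻¹'
            ((fun x => (MulAut.conj g).toMonoidHom h * x) ⁻¹' A')
            = (fun x => h * x) ⁻¹' ((fun x : G => g * x * g⁻¹) ⁻¹' A') := by
          ext x
          simp only [Set.mem_preimage, MulEquiv.coe_toMonoidHom, MulAut.conj_apply]
          have heq : g * h * g⁻¹ * (g * x * g⁻¹) = g * (h * x) * g⁻¹ := by group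
          rw [heq]
        rw [hset, hm_haar H hHc h hh _ (hc_meas hA'2)]
      have hmain := haar_eq K.1 K.2.measurableSet lam (m K) hl0 (hm_supp K hKc) hl
        (fun k hk A' hA'2 => hm_haar K hKc k hk A' hA'2)
        (((K.1 : Subgroup G) : Set G) ∩ A) (K.2.measurableSet.inter hA)
      rw [← hmain, hlam_apply _ (K.2.measurableSet.inter hA), Set.preimage_inter, hKpre]
    -- measurability of the equality set, then a.e. argument
    have hf1 : Measurable (fun H : Chab G =>
        m (conjChab g H) ((((conjChab g H).1 : Subgroup G) : Set G) ∩ A)) :=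
      (hm_meas A hA).comp hcm
    have hf2 : Measurable (fun H : Chab G =>
        m H (((H.1 : Subgroup G) : Set G) ∩ ((fun x : G => g * x * g⁻¹) ⁻¹' A))) :=
      hm_meas _ hA'
    have hTmeas : MeasurableSet {H : Chab G |
        ¬ m (conjChab g H) ((((conjChab g H).1 : Subgroup G) : Set G) ∩ A)
          = m H (((H.1 : Subgroup G) : Set G) ∩ ((fun x : G => g * x * g⁻¹) ⁻¹' A))} := by
      have heqset : {H : Chab G |
          m (conjChab g H) ((((conjChab g H).1 : Subgroup G) : Set G) ∩ A)
            = m H (((H.1 : Subgroup G) : Set G) ∩ ((fun x : G => g * x * g⁻¹) ⁻¹' A))}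
          = {H : Chab G | (fun H : Chab G =>
              m (conjChab g H) ((((conjChab g H).1 : Subgroup G) : Set G) ∩ A)) H
              ≤ (fun H : Chab G =>
              m H (((H.1 : Subgroup G) : Set G) ∩ ((fun x : G => g * x * g⁻¹) ⁻¹' A))) H}
            ∩ {H : Chab G | (fun H : Chab G =>
              m H (((H.1 : Subgroup G) : Set G) ∩ ((fun x : G => g * x * g⁻¹) ⁻¹' A))) H
              ≤ (fun H : Chab G =>
              m (conjChab g H) ((((conjChab g H).1 : Subgroup G) : Set G) ∩ A)) H} := by
        ext H; simp [le_antisymm_iff]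
      have hm2 : MeasurableSet {H : Chab G |
          m (conjChab g H) ((((conjChab g H).1 : Subgroup G) : Set G) ∩ A)
            = m H (((H.1 : Subgroup G) : Set G) ∩ ((fun x : G => g * x * g⁻¹) ⁻¹' A))} := by
        rw [heqset]
        exact (measurableSet_le hf1 hf2).inter (measurableSet_le hf2 hf1)
      exact hm2.compl
    have hae : ∀ᵐ H ∂μ,
        m (conjChab g H) ((((conjChab g H).1 : Subgroup G) : Set G) ∩ A)
          = m H (((H.1 : Subgroup G) : Set G) ∩ ((fun x : G => g * x * g⁻¹) ⁻¹' A)) := by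
      rw [ae_iff]
      exact hnull _ hTmeas fun H hH hc => hH (key H hc)
    exact (lintegral_congr_ae hae).symm
  · -- support inclusion
    intro x hx
    simp only [Set.mem_iUnion] at hx
    obtain ⟨H₀, hH₀, hxH₀⟩ := hx
    intro U hU hxU
    have hHitOpen : IsOpen {H : Chab G | ((H.1 : Set G) ∩ U).Nonempty} :=
      TopologicalSpace.isOpen_generateFrom_of_mem (Or.inl ⟨U, hU, rfl⟩)
    have hmem : H₀ ∈ {H : Chab G | ((H.1 : Set G) ∩ U).Nonempty} := ⟨x, hxH₀, hxU⟩
    have hpos : 0 < μ {H : Chab G | ((H.1 : Set G) ∩ U).Nonempty} :=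
      hH₀ _ hHitOpen hmem
    have hfmeas : Measurable (fun H : Chab G =>
        m H (((H.1 : Subgroup G) : Set G) ∩ U)) := hm_meas U hU.measurableSet
    rw [hνap U hU.measurableSet, lintegral_pos_iff_support hfmeas]
    set T := {H : Chab G | ((H.1 : Set G) ∩ U).Nonempty}
      ∩ {H : Chab G | m H (((H.1 : Subgroup G) : Set G) ∩ U) = 0} with hTdef
    have hTmeas : MeasurableSet T :=
      hHitOpen.measurableSet.inter (hfmeas (measurableSet_singleton 0))
    have hT0 : μ T = 0 := by
      refine hnull T hTmeas ?_
      rintro H ⟨hHit, hzero⟩ hc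
      haveI := hm_prob H hc
      have hp := haar_pos H.1 H.2.measurableSet hc (m H) (hm_supp H hc)
        (fun h hh A hA => hm_haar H hc h hh A hA) U hU hHit
      rw [hzero] at hp
      exact lt_irrefl _ hp
    have hsub : {H : Chab G | ((H.1 : Set G) ∩ U).Nonempty} \ T ⊆
        Function.support (fun H : Chab G => m H (((H.1 : Subgroup G) : Set G) ∩ U)) := by
      rintro H ⟨hHit, hnT⟩
      simp only [Function.mem_support]
      intro h0
      exact hnT ⟨hHit, h0⟩
    calc (0 : ENNReal) < μ {H : Chab G | ((H.1 : Set G) ∩ U).Nonempty} := hpos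
      _ = μ ({H : Chab G | ((H.1 : Set G) ∩ U).Nonempty} \ T) := (measure_diff_null hT0).symm
      _ ≤ μ (Function.support fun H : Chab G =>
            m H (((H.1 : Subgroup G) : Set G) ∩ U)) := measure_mono hsub
end

section
/- Let G = ⋃ₙ Oₙ be a locally compact second countable group written as an ascending union of open subgroups, and let μ be a compact IRS of G with μ(Sub(O₀)) > 0. Suppose for every n with μ(Sub(Oₙ)) > 0, the conditional IRS μₙ(A) := μ(A)/μ(Sub(Oₙ)) on Sub(Oₙ) satisfies μₙ(Sub(E(Oₙ))) = 1. Then μ(Sub(E(G))) = 1, where E denotes the locally elliptic radical. -/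
open MeasureTheory

section Aux

variable {G : Type*} [Group G] [TopologicalSpace G] [IsTopologicalGroup G]

/-- Key lemma: for `m ≤ n`, `E(Oₙ) ∩ Oₘ ≤ E(Oₘ)`. -/
lemma radical_inter_le (O : ℕ → Subgroup G) (hopen : ∀ n, IsOpen ((O n : Subgroup G) : Set G))
    (hmono : Monotone O) (E : ℕ → Subgroup G)
    (hE : ∀ n, IsLocallyEllipticRadicalOf (E n) (O n))
    {m n : ℕ} (hmn : m ≤ n) : E n ⊓ O m ≤ E m := by
  apply (hE m).2.2.2.2 (E n ⊓ O m) inf_le_right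
  · intro g hg x hx
    rw [Subgroup.mem_inf] at hx ⊢
    refine ⟨(hE n).2.2.1 g (hmono hmn hg) x hx.1, ?_⟩
    exact mul_mem (mul_mem hg hx.2) (inv_mem hg)
  · intro K hK hKc
    have hKE : K ⊆ ((E n : Subgroup G) : Set G) := fun x hx => by
      have := hK hx
      rw [SetLike.mem_coe, Subgroup.mem_inf] at this
      exact this.1
    obtain ⟨C, hCle, hCc, hKC⟩ := (hE n).2.2.2.1 K hKE hKc
    refine ⟨C ⊓ O m, inf_le_inf_right _ hCle, ?_, ?_⟩
    · rw [Subgroup.coe_inf]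
      exact hCc.inter_right (Subgroup.isClosed_of_isOpen (O m) (hopen m))
    · rw [Subgroup.coe_inf]
      refine Set.subset_inter hKC (fun x hx => ?_)
      have := hK hx
      rw [SetLike.mem_coe, Subgroup.mem_inf] at this
      exact this.2

end Aux

/-- let `G = ⋃ₙ Oₙ` be an ascending union of open subgroups and `μ` a
compact IRS of `G` with `μ(Sub O₀) > 0`.  If for every `n` with `μ(Sub Oₙ) > 0` the
conditional IRS `μₙ = μ(· )/μ(Sub Oₙ)` gives full measure to `Sub (E(Oₙ))`
(equivalently `μ(Sub (E(Oₙ))) = μ(Sub Oₙ)`), then `μ(Sub (E(G))) = 1`. -/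
theorem compact_irs_in_locally_elliptic_radical_of_ascending_union
    (G : Type*) [Group G] [TopologicalSpace G] [IsTopologicalGroup G]
    [LocallyCompactSpace G] [SecondCountableTopology G]
    (O : ℕ → Subgroup G) (hopen : ∀ n, IsOpen ((O n : Subgroup G) : Set G))
    (hmono : Monotone O) (hunion : ∀ g : G, ∃ n, g ∈ O n)
    (E : ℕ → Subgroup G) (hE : ∀ n, IsLocallyEllipticRadicalOf (E n) (O n))
    (EG : Subgroup G) (hEG : IsLocallyEllipticRadicalOf EG ⊤)
    (μ : Measure (Chab G)) [IsProbabilityMeasure μ]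
    (hinv : ∀ g : G, ∀ A : Set (Chab G), MeasurableSet A →
      μ (conjChab g ⁻¹' A) = μ A)
    (hcompact : μ {H : Chab G | IsCompact ((H.1 : Subgroup G) : Set G)} = 1)
    (h0 : 0 < μ {H : Chab G | (H.1 : Subgroup G) ≤ O 0})
    (hcond : ∀ n : ℕ, 0 < μ {H : Chab G | (H.1 : Subgroup G) ≤ O n} →
      μ {H : Chab G | (H.1 : Subgroup G) ≤ E n} =
        μ {H : Chab G | (H.1 : Subgroup G) ≤ O n}) :
    μ {H : Chab G | (H.1 : Subgroup G) ≤ EG} = 1 := by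
  classical
  -- subgroups `NN m = ⋂_{n ≥ m} E n` and `M = ⋃ m NN m`
  set NN : ℕ → Subgroup G := fun m => ⨅ (n : ℕ) (_ : m ≤ n), E n with hNN
  have hmemNN : ∀ m x, x ∈ NN m ↔ ∀ n, m ≤ n → x ∈ E n := by
    intro m x
    simp only [hNN, Subgroup.mem_iInf]
  have hNNmono : Monotone NN := by
    intro a b hab
    intro x hx
    rw [hmemNN] at hx ⊢
    exact fun n hn => hx n (hab.trans hn)
  have hNNle : ∀ m, NN m ≤ E m := fun m x hx => (hmemNN m x).1 hx m le_rfl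
  have hNNclosed : ∀ m, IsClosed ((NN m : Subgroup G) : Set G) := by
    intro m
    have : ((NN m : Subgroup G) : Set G) = ⋂ (n : ℕ) (_ : m ≤ n), ((E n : Subgroup G) : Set G) := by
      simp only [hNN, Subgroup.coe_iInf]
    rw [this]
    exact isClosed_iInter fun n => isClosed_iInter fun _ => (hE n).2.1
  set M : Subgroup G := ⨆ m, NN m with hM
  have hmemM : ∀ x, x ∈ M ↔ ∃ m, x ∈ NN m := fun x =>
    Subgroup.mem_iSup_of_directed hNNmono.directed_le
  have hNNleM : ∀ m, NN m ≤ M := fun m => le_iSup NN m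
  -- `M ∩ O k ⊆ NN k`
  have hMO : ∀ k x, x ∈ M → x ∈ O k → x ∈ NN k := by
    intro k x hxM hxO
    obtain ⟨j, hj⟩ := (hmemM x).1 hxM
    rw [hmemNN]
    intro n hn
    rcases le_total j n with h | h
    · exact (hmemNN j x).1 hj n h
    · exact radical_inter_le O hopen hmono E hE h
        (by rw [Subgroup.mem_inf]; exact ⟨(hmemNN j x).1 hj j le_rfl, hmono hn hxO⟩)
  -- `M` is conjugation invariant
  have hMconj : ∀ g x, x ∈ M → g * x * g⁻¹ ∈ M := by
    intro g x hx
    obtain ⟨i, hi⟩ := (hmemM x).1 hx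
    obtain ⟨j, hj⟩ := hunion g
    refine (hmemM _).2 ⟨max i j, ?_⟩
    rw [hmemNN]
    intro n hn
    exact (hE n).2.2.1 g (hmono ((le_max_right i j).trans hn) hj) x
      ((hmemNN i x).1 hi n ((le_max_left i j).trans hn))
  -- `M` is locally elliptic
  have hMell : IsLocallyElliptic M := by
    intro K hK hKc
    have hcover : K ⊆ ⋃ n, ((O n : Subgroup G) : Set G) := by
      intro x _
      obtain ⟨n, hn⟩ := hunion x
      exact Set.mem_iUnion.2 ⟨n, hn⟩
    obtain ⟨k, hk⟩ := hKc.elim_directed_cover (fun n => ((O n : Subgroup G) : Set G))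
      hopen hcover (fun a b => ⟨max a b, hmono (le_max_left a b), hmono (le_max_right a b)⟩)
    have hKNN : K ⊆ ((NN k : Subgroup G) : Set G) := fun x hx =>
      hMO k x (hK hx) (hk hx)
    have hKE : K ⊆ ((E k : Subgroup G) : Set G) := fun x hx => hNNle k (hKNN hx)
    obtain ⟨C, hCle, hCc, hKC⟩ := (hE k).2.2.2.1 K hKE hKc
    refine ⟨C ⊓ NN k, inf_le_right.trans (hNNleM k), ?_, ?_⟩
    · rw [Subgroup.coe_inf]
      exact hCc.inter_right (hNNclosed k)
    · rw [Subgroup.coe_inf]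
      exact Set.subset_inter hKC hKNN
  -- hence `M ≤ EG`
  have hMEG : M ≤ EG :=
    hEG.2.2.2.2 M le_top (fun g _ x hx => hMconj g x hx) hMell
  -- measure-theoretic part
  set S : ℕ → Set (Chab G) := fun n => {H : Chab G | (H.1 : Subgroup G) ≤ O n} with hS
  set A : ℕ → Set (Chab G) := fun n => {H : Chab G | (H.1 : Subgroup G) ≤ E n} with hA
  have hAS : ∀ n, A n ⊆ S n := fun n H hH => hH.trans (hE n).1
  have hSmono : ∀ {a b}, a ≤ b → S a ⊆ S b := fun hab H hH => hH.trans (hmono hab)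
  have hSpos : ∀ n, 0 < μ (S n) := fun n => h0.trans_le (measure_mono (hSmono (Nat.zero_le n)))
  have hAeq : ∀ n, μ (A n) = μ (S n) := fun n => hcond n (hSpos n)
  haveI : BorelSpace (Chab G) := ⟨rfl⟩
  have hAmeas : ∀ n, MeasurableSet (A n) := by
    intro n
    have hV : IsOpen (((E n : Subgroup G) : Set G)ᶜ) := (hE n).2.1.isOpen_compl
    have hopenHit : IsOpen {H : Chab G | ((H.1 : Set G) ∩ ((E n : Subgroup G) : Set G)ᶜ).Nonempty} :=
      TopologicalSpace.isOpen_generateFrom_of_mem (Or.inl ⟨_, hV, rfl⟩)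
    have hAeq' : A n =
        {H : Chab G | ((H.1 : Set G) ∩ ((E n : Subgroup G) : Set G)ᶜ).Nonempty}ᶜ := by
      ext H
      simp only [hA, Set.mem_setOf_eq, Set.mem_compl_iff, Set.not_nonempty_iff_eq_empty,
        ← Set.disjoint_iff_inter_eq_empty, Set.disjoint_compl_right_iff_subset]
      exact ⟨fun h => h, fun h => h⟩
    rw [hAeq']
    exact hopenHit.measurableSet.compl
  have hnull : ∀ n, μ (S n \ A n) = 0 := by
    intro n
    have h1 : μ (S n ∩ A n) + μ (S n \ A n) = μ (S n) :=
      measure_inter_add_diff _ (hAmeas n)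
    rw [Set.inter_eq_self_of_subset_right (hAS n), hAeq n] at h1
    have hfin : μ (S n) ≠ ⊤ := measure_ne_top μ _
    have : μ (S n) + μ (S n \ A n) = μ (S n) + 0 := by rw [add_zero]; exact h1
    exact (ENNReal.add_right_inj hfin).1 this
  -- the target set
  set T : Set (Chab G) := {H : Chab G | (H.1 : Subgroup G) ≤ EG} with hT
  have hle : ∀ m, μ (S m) ≤ μ T := by
    intro m
    set B : Set (Chab G) := ⋂ i, A (m + i) with hB
    have hBnull : μ (S m \ B) = 0 := by
      have hsub : S m \ B ⊆ ⋃ i, (S (m + i) \ A (m + i)) := by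
        rintro H ⟨hHS, hHB⟩
        rw [hB, Set.mem_iInter, not_forall] at hHB
        obtain ⟨i, hi⟩ := hHB
        exact Set.mem_iUnion.2 ⟨i, hSmono (Nat.le_add_right m i) hHS, hi⟩
      exact measure_mono_null hsub (measure_iUnion_null fun i => hnull (m + i))
    have hBT : B ⊆ T := by
      intro H hH
      rw [hB, Set.mem_iInter] at hH
      refine le_trans ?_ hMEG
      refine le_trans ?_ (hNNleM m)
      intro x hx
      rw [hmemNN]
      intro n hn
      obtain ⟨i, rfl⟩ := Nat.exists_eq_add_of_le hn
      exact hH i hx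
    calc μ (S m) = μ ((S m ∩ B) ∪ (S m \ B)) := by rw [Set.inter_union_diff]
      _ ≤ μ (S m ∩ B) + μ (S m \ B) := measure_union_le _ _
      _ = μ (S m ∩ B) := by rw [hBnull, add_zero]
      _ ≤ μ T := measure_mono ((Set.inter_subset_right).trans hBT)
  have hcomp_sub : {H : Chab G | IsCompact ((H.1 : Subgroup G) : Set G)} ⊆ ⋃ n, S n := by
    intro H hH
    have hcover : ((H.1 : Subgroup G) : Set G) ⊆ ⋃ n, ((O n : Subgroup G) : Set G) := by
      intro x _
      obtain ⟨n, hn⟩ := hunion x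
      exact Set.mem_iUnion.2 ⟨n, hn⟩
    obtain ⟨k, hk⟩ := hH.elim_directed_cover (fun n => ((O n : Subgroup G) : Set G))
      hopen hcover (fun a b => ⟨max a b, hmono (le_max_left a b), hmono (le_max_right a b)⟩)
    exact Set.mem_iUnion.2 ⟨k, fun x hx => hk hx⟩
  have hone : (1 : ENNReal) ≤ μ T := by
    have h1 : (1 : ENNReal) ≤ μ (⋃ n, S n) := hcompact ▸ measure_mono hcomp_sub
    have hdir : Directed (· ⊆ ·) S := fun a b =>
      ⟨max a b, hSmono (le_max_left a b), hSmono (le_max_right a b)⟩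
    rw [hdir.measure_iUnion] at h1
    exact h1.trans (iSup_le hle)
  exact le_antisymm prob_le_one hone
end
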